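/- For a small category A, the two canonical Kan-extension adjunctions between presheaves and copresheaves coincide: the left Kan extension Lan_y y^♯ of the copresheaf embedding along the Yoneda embedding is naturally isomorphic to the right Kan extension Ran_y y^♯, and dually Ran_{y^♯} y ≅ Lan_{y^♯} y; consequently O := Lan_y y^♯ : Set^{A^op} → (Set^A)^op is left adjoint to Spec := Ran_{y^♯} y : (Set^A)^op → Set^{A^op} (the Isbell adjunction). -/

import Mathlib

/-!
STATEMENT 0: For a small category `A`, the two canonical Kan-extension adjunctions between
presheaves and copresheaves coincide: `Lan_y y♯ ≅ Ran_y y♯`, dually `Ran_{y♯} y ≅ Lan_{y♯} y`,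
and consequently `O := Lan_y y♯` is left adjoint to `Spec := Ran_{y♯} y` (Isbell adjunction).
-/

universe u

open CategoryTheory Functor Limits Opposite

noncomputable section

/-- The copresheaf embedding `y♯ : A ⥤ (Set^A)ᵒᵖ`, `a ↦ A(a, -)`. -/
def ysharp (A : Type u) [SmallCategory A] : A ⥤ (A ⥤ Type u)ᵒᵖ := coyoneda.rightOp


namespace IsbellAux

variable {A : Type u} [SmallCategory A]

def SpecF (A : Type u) [SmallCategory A] : (A ⥤ Type u)ᵒᵖ ⥤ (Aᵒᵖ ⥤ Type u) :=
  yoneda ⋙ (whiskeringLeft _ _ (Type u)).obj (ysharp A).op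

def specCounit (A : Type u) [SmallCategory A] : ysharp A ⋙ SpecF A ⟶ yoneda where
  app a :=
    { app := fun b => ↾fun (φ : (ysharp A).obj b.unop ⟶ (ysharp A).obj a) => φ.unop.app a (𝟙 a)
      naturality := by intro b b' g; ext φ; rfl }
  naturality := by
    intro a a' f; ext b φ
    have h := NatTrans.naturality_apply φ.unop f (𝟙 a)
    have e : f ≫ 𝟙 a' = 𝟙 a ≫ f := by simp
    exact (congrArg (fun z => φ.unop.app a' z) e).trans h

def specUnit (A : Type u) [SmallCategory A] : yoneda ⟶ ysharp A ⋙ SpecF A where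
  app a :=
    { app := fun b => ↾fun (f : b.unop ⟶ a) =>
        ((coyoneda.map f.op).op : (ysharp A).obj b.unop ⟶ (ysharp A).obj a)
      naturality := by
        intro b b' g; ext f; apply Quiver.Hom.unop_inj; ext c x; exact Category.assoc _ _ _ }
  naturality := by
    intro a a' f; ext b g; apply Quiver.Hom.unop_inj; ext c x; exact Category.assoc _ _ _

/-- auxiliary natural transformation for `specLiftR`. -/
def specLiftRaux (G : (A ⥤ Type u)ᵒᵖ ⥤ (Aᵒᵖ ⥤ Type u)) (β : ysharp A ⋙ G ⟶ yoneda)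
    (X : (A ⥤ Type u)ᵒᵖ) (b : Aᵒᵖ) (ξ : (G.obj X).obj b) :
    X.unop ⟶ coyoneda.obj (op b.unop) where
  app c := ↾fun x => (β.app c).app b ((G.map (coyonedaEquiv.symm x).op).app b ξ)
  naturality := by
    intro c c' f
    ext x
    have h1 := ConcreteCategory.congr_hom (NatTrans.congr_app (β.naturality f) b)
      ((G.map (coyonedaEquiv.symm x).op).app b ξ)
    have h2 : (coyonedaEquiv.symm x).op ≫ (ysharp A).map f
        = (coyonedaEquiv.symm (X.unop.map f x)).op := by
      apply Quiver.Hom.unop_inj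
      simp [ysharp, coyonedaEquiv_symm_map]
    have h3 : (G.map ((coyonedaEquiv.symm x).op ≫ (ysharp A).map f)).app b ξ
        = (G.map ((ysharp A).map f)).app b ((G.map (coyonedaEquiv.symm x).op).app b ξ) :=
      congrArg (fun (F : G.obj X ⟶ G.obj ((ysharp A).obj c')) => F.app b ξ) (G.map_comp _ _)
    exact (congrArg (fun y => (β.app c').app b y)
      ((congrArg (fun (z : X ⟶ (ysharp A).obj c') => (G.map z).app b ξ) h2.symm).trans h3)).trans h1

/-- The canonical lift for the right Kan extension property of `SpecF`. -/
def specLiftR (G : (A ⥤ Type u)ᵒᵖ ⥤ (Aᵒᵖ ⥤ Type u)) (β : ysharp A ⋙ G ⟶ yoneda) :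
    G ⟶ SpecF A where
  app X :=
    { app := fun b => ↾fun ξ =>
        ((specLiftRaux G β X b ξ).op : (ysharp A).obj b.unop ⟶ X)
      naturality := by
        intro b b' g
        ext ξ
        apply Quiver.Hom.unop_inj
        ext c x
        have h1 := ConcreteCategory.congr_hom ((G.map (coyonedaEquiv.symm x).op).naturality g) ξ
        have h2 := ConcreteCategory.congr_hom ((β.app c).naturality g)
          ((G.map (coyonedaEquiv.symm x).op).app b ξ)
        exact (congrArg (fun y => (β.app c).app b' y) h1).trans h2 }
  naturality := by
    intro X Y h
    ext b ξ
    apply Quiver.Hom.unop_inj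
    ext c x
    have h2 : (coyonedaEquiv.symm (h.unop.app c x)).op
        = h ≫ (coyonedaEquiv.symm x).op := by
      apply Quiver.Hom.unop_inj
      apply coyonedaEquiv.injective
      simp [coyonedaEquiv_comp]
    change (β.app c).app b ((G.map (coyonedaEquiv.symm x).op).app b ((G.map h).app b ξ))
      = (β.app c).app b ((G.map (coyonedaEquiv.symm (h.unop.app c x)).op).app b ξ)
    rw [h2, G.map_comp]
    rfl

end IsbellAux

namespace IsbellAux
variable {A : Type u} [SmallCategory A]

lemma specLiftR_fac (G : (A ⥤ Type u)ᵒᵖ ⥤ (Aᵒᵖ ⥤ Type u)) (β : ysharp A ⋙ G ⟶ yoneda) :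
    whiskerLeft (ysharp A) (specLiftR G β) ≫ specCounit A = β := by
  ext a b ξ
  have h1 : (coyonedaEquiv.symm (𝟙 a)).op = 𝟙 ((ysharp A).obj a) := by
    apply Quiver.Hom.unop_inj
    ext c f
    exact (coyonedaEquiv_symm_app_apply (F := coyoneda.obj (op a)) (𝟙 a) c f).trans
      (Category.id_comp f)
  exact congrArg (fun (F : G.obj ((ysharp A).obj a) ⟶ G.obj ((ysharp A).obj a)) =>
    (β.app a).app b (F.app b ξ)) ((congrArg G.map h1).trans (G.map_id _))

end IsbellAux

namespace IsbellAux
variable {A : Type u} [SmallCategory A]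

lemma specLiftR_uniq (G : (A ⥤ Type u)ᵒᵖ ⥤ (Aᵒᵖ ⥤ Type u)) (β : ysharp A ⋙ G ⟶ yoneda)
    (γ : G ⟶ SpecF A) (hγ : whiskerLeft (ysharp A) γ ≫ specCounit A = β) :
    γ = specLiftR G β := by
  ext X b ξ
  apply Quiver.Hom.unop_inj
  ext c x
  have hn := ConcreteCategory.congr_hom (NatTrans.congr_app (γ.naturality (coyonedaEquiv.symm x).op) b) ξ
  have hw := ConcreteCategory.congr_hom (NatTrans.congr_app (NatTrans.congr_app hγ c) b)
    ((G.map (coyonedaEquiv.symm x).op).app b ξ)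
  have e : x = (coyonedaEquiv.symm x).app c (𝟙 c) := by simp
  exact (congrArg (fun z => ((γ.app X).app b ξ).unop.app c z) e).trans
    ((congrArg (fun ψ => ψ.unop.app c (𝟙 c)) hn).symm.trans hw)

end IsbellAux

namespace IsbellAux
variable {A : Type u} [SmallCategory A]

instance specIsRKE : (SpecF A).IsRightKanExtension (specCounit A) where
  nonempty_isUniversal := ⟨IsTerminal.ofUniqueHom
    (fun G' => CostructuredArrow.homMk (specLiftR G'.left G'.hom) (specLiftR_fac _ _))
    (fun G' m => by
      ext : 1
      exact specLiftR_uniq _ _ m.left (CostructuredArrow.w m))⟩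

def specLiftL (G : (A ⥤ Type u)ᵒᵖ ⥤ (Aᵒᵖ ⥤ Type u)) (β : yoneda ⟶ ysharp A ⋙ G) :
    SpecF A ⟶ G where
  app X :=
    { app := fun b => ↾fun (ψ : (ysharp A).obj b.unop ⟶ X) =>
        (G.map ψ).app b ((β.app b.unop).app b (𝟙 b.unop))
      naturality := by
        intro b b' g
        ext ψ
        have n1 := ConcreteCategory.congr_hom ((G.map ψ).naturality g) ((β.app b.unop).app b (𝟙 b.unop))
        have n2 := ConcreteCategory.congr_hom ((β.app b.unop).naturality g) (𝟙 b.unop)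
        have n3 := ConcreteCategory.congr_hom (NatTrans.congr_app (β.naturality g.unop) b') (𝟙 b'.unop)
        have n4 : (G.map ((coyoneda.map g).op ≫ ψ)).app b' ((β.app b'.unop).app b' (𝟙 b'.unop))
            = (G.map ψ).app b' ((G.map ((ysharp A).map g.unop)).app b'
              ((β.app b'.unop).app b' (𝟙 b'.unop))) :=
          congrArg (fun (F : G.obj ((ysharp A).obj b'.unop) ⟶ G.obj X) =>
            F.app b' ((β.app b'.unop).app b' (𝟙 b'.unop))) (G.map_comp _ _)
        have e : (𝟙 b'.unop ≫ g.unop) = g.unop ≫ 𝟙 b.unop := by simp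
        exact n4.trans ((congrArg (fun z => (G.map ψ).app b' z) (n3.symm.trans
          ((congrArg (fun z => (β.app b.unop).app b' z) e).trans n2))).trans n1) }
  naturality := by
    intro X Y h
    ext b ψ
    exact congrArg (fun (F : G.obj ((ysharp A).obj b.unop) ⟶ G.obj Y) =>
      F.app b ((β.app b.unop).app b (𝟙 b.unop))) (G.map_comp (ψ : (ysharp A).obj b.unop ⟶ X) h)

end IsbellAux

namespace IsbellAux
variable {A : Type u} [SmallCategory A]

lemma specLiftL_fac (G : (A ⥤ Type u)ᵒᵖ ⥤ (Aᵒᵖ ⥤ Type u)) (β : yoneda ⟶ ysharp A ⋙ G) :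
    specUnit A ≫ whiskerLeft (ysharp A) (specLiftL G β) = β := by
  ext a b f
  have n3 := congrArg (fun (F : yoneda.obj b.unop ⟶ (ysharp A ⋙ G).obj a) => F.app b (𝟙 b.unop))
    (β.naturality f)
  exact (((congrArg (fun z => (β.app a).app b z) (Category.id_comp f)).symm).trans n3).symm

lemma specLiftL_uniq (G : (A ⥤ Type u)ᵒᵖ ⥤ (Aᵒᵖ ⥤ Type u)) (β : yoneda ⟶ ysharp A ⋙ G)
    (γ : SpecF A ⟶ G) (hγ : specUnit A ≫ whiskerLeft (ysharp A) γ = β) :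
    γ = specLiftL G β := by
  ext X b ψ
  have hn := ConcreteCategory.congr_hom (NatTrans.congr_app (γ.naturality (ψ : (ysharp A).obj b.unop ⟶ X)) b)
    (𝟙 ((ysharp A).obj b.unop))
  have hw := ConcreteCategory.congr_hom (NatTrans.congr_app (NatTrans.congr_app hγ b.unop) b) (𝟙 b.unop)
  have e1 : ((coyoneda.map (𝟙 b.unop).op).op : (ysharp A).obj b.unop ⟶ (ysharp A).obj b.unop)
      = 𝟙 _ := by
    rw [op_id, CategoryTheory.Functor.map_id]; rfl
  exact (congrArg (fun z => (γ.app X).app b z) (Category.id_comp ψ).symm).trans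
    (hn.trans (congrArg (fun z => (G.map ψ).app b z)
      ((congrArg (fun z => (γ.app ((ysharp A).obj b.unop)).app b z) e1.symm).trans hw)))

end IsbellAux

namespace IsbellAux
variable {A : Type u} [SmallCategory A]

instance specIsLKE : (SpecF A).IsLeftKanExtension (specUnit A) where
  nonempty_isUniversal := ⟨IsInitial.ofUniqueHom
    (fun G' => StructuredArrow.homMk (specLiftL G'.right G'.hom) (specLiftL_fac _ _))
    (fun G' m => by
      ext : 1
      exact specLiftL_uniq _ _ m.right (StructuredArrow.w m))⟩

end IsbellAux

namespace IsbellAux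
variable {A : Type u} [SmallCategory A]

def OF (A : Type u) [SmallCategory A] : (Aᵒᵖ ⥤ Type u) ⥤ (A ⥤ Type u)ᵒᵖ :=
  (coyoneda ⋙ (whiskeringLeft A (Aᵒᵖ ⥤ Type u) (Type u)).obj yoneda).rightOp

def ounitAux (a : A) : (yoneda ⋙ coyoneda.obj (op (yoneda.obj a))) ⟶ coyoneda.obj (op a) where
  app b := ↾fun (φ : yoneda.obj a ⟶ yoneda.obj b) => yonedaEquiv φ
  naturality := by
    intro b b' f
    ext φ
    simpa using yonedaEquiv_comp φ (yoneda.map f)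

def ounit (A : Type u) [SmallCategory A] : ysharp A ⟶ yoneda ⋙ OF A where
  app a := (ounitAux a).op
  naturality := by
    intro a a' f
    apply Quiver.Hom.unop_inj
    ext b φ
    exact yonedaEquiv_naturality (F := yoneda.obj b) φ f

def ocounitAux (a : A) : coyoneda.obj (op a) ⟶ (yoneda ⋙ coyoneda.obj (op (yoneda.obj a))) where
  app b := ↾fun (f : a ⟶ b) => yoneda.map f
  naturality := by
    intro b b' g
    ext f
    dsimp
    rw [Functor.map_comp]

def ocounit (A : Type u) [SmallCategory A] : yoneda ⋙ OF A ⟶ ysharp A where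
  app a := (ocounitAux a).op
  naturality := by
    intro a a' f
    apply Quiver.Hom.unop_inj
    ext b g
    dsimp [OF, ocounitAux, ysharp]
    exact (yoneda.map_comp f g).symm

end IsbellAux

namespace IsbellAux
variable {A : Type u} [SmallCategory A]

def oLiftRaux (G : (Aᵒᵖ ⥤ Type u) ⥤ (A ⥤ Type u)ᵒᵖ) (β : yoneda ⋙ G ⟶ ysharp A)
    (P : Aᵒᵖ ⥤ Type u) :
    (yoneda ⋙ coyoneda.obj (op P)) ⟶ (G.obj P).unop where
  app a := ↾fun (s : P ⟶ yoneda.obj a) => (G.map s).unop.app a ((β.app a).unop.app a (𝟙 a))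
  naturality := by
    intro a a' f
    ext s
    have n1 := ConcreteCategory.congr_hom ((G.map s).unop.naturality f) ((β.app a).unop.app a (𝟙 a))
    have n2 := ConcreteCategory.congr_hom ((β.app a).unop.naturality f) (𝟙 a)
    have n3 := ConcreteCategory.congr_hom (NatTrans.congr_app (congr_arg Quiver.Hom.unop (β.naturality f)) a')
      (𝟙 a')
    have n4 : (G.map (s ≫ yoneda.map f)).unop.app a' ((β.app a').unop.app a' (𝟙 a'))
        = (G.map s).unop.app a' ((G.map (yoneda.map f)).unop.app a'
          ((β.app a').unop.app a' (𝟙 a'))) := by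
      rw [G.map_comp]; rfl
    have e : f ≫ 𝟙 a' = 𝟙 a ≫ f := by simp
    exact n4.trans ((congrArg (fun z => (G.map s).unop.app a' z) (n3.trans
      ((congrArg (fun z => (β.app a).unop.app a' z) e).trans n2))).trans n1)

def oLiftR (G : (Aᵒᵖ ⥤ Type u) ⥤ (A ⥤ Type u)ᵒᵖ) (β : yoneda ⋙ G ⟶ ysharp A) :
    G ⟶ OF A where
  app P := (oLiftRaux G β P).op
  naturality := by
    intro P Q h
    apply Quiver.Hom.unop_inj
    ext a s
    exact (congrArg (fun (F : G.obj P ⟶ G.obj (yoneda.obj a)) =>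
      F.unop.app a ((β.app a).unop.app a (𝟙 a))) (G.map_comp h s)).symm

end IsbellAux

namespace IsbellAux
variable {A : Type u} [SmallCategory A]

lemma oLiftR_fac (G : (Aᵒᵖ ⥤ Type u) ⥤ (A ⥤ Type u)ᵒᵖ) (β : yoneda ⋙ G ⟶ ysharp A) :
    whiskerLeft yoneda (oLiftR G β) ≫ ocounit A = β := by
  ext a
  apply Quiver.Hom.unop_inj
  ext b f
  have n3 := congrArg (fun (F : ((ysharp A).obj b).unop ⟶ (G.obj (yoneda.obj a)).unop) => F.app b (𝟙 b))
    (congr_arg Quiver.Hom.unop (β.naturality f))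
  exact n3.trans (congrArg (fun z => (β.app a).unop.app b z) (Category.comp_id f))

lemma oLiftR_uniq (G : (Aᵒᵖ ⥤ Type u) ⥤ (A ⥤ Type u)ᵒᵖ) (β : yoneda ⋙ G ⟶ ysharp A)
    (γ : G ⟶ OF A) (hγ : whiskerLeft yoneda γ ≫ ocounit A = β) : γ = oLiftR G β := by
  ext P
  apply Quiver.Hom.unop_inj
  ext a s
  have hn := congrArg (fun (F : ((OF A).obj (yoneda.obj a)).unop ⟶ (G.obj P).unop) =>
      F.app a (𝟙 (yoneda.obj a)))
    (congr_arg Quiver.Hom.unop (γ.naturality (s : P ⟶ yoneda.obj a)))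
  have hw := congrArg (fun (F : ((ysharp A).obj a).unop ⟶ (G.obj (yoneda.obj a)).unop) => F.app a (𝟙 a))
    (congr_arg Quiver.Hom.unop (NatTrans.congr_app hγ a))
  exact (congrArg (fun z => (γ.app P).unop.app a z) (Category.comp_id s).symm).trans
    (hn.symm.trans (congrArg (fun z => (G.map s).unop.app a z)
      ((congrArg (fun z => (γ.app (yoneda.obj a)).unop.app a z) (yoneda.map_id a).symm).trans
        hw)))

end IsbellAux

namespace IsbellAux
variable {A : Type u} [SmallCategory A]

instance oIsRKE : (OF A).IsRightKanExtension (ocounit A) where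
  nonempty_isUniversal := ⟨IsTerminal.ofUniqueHom
    (fun G' => CostructuredArrow.homMk (oLiftR G'.left G'.hom) (oLiftR_fac _ _))
    (fun G' m => by
      ext : 1
      exact oLiftR_uniq _ _ m.left (CostructuredArrow.w m))⟩

def oLiftLaux2 (G : (Aᵒᵖ ⥤ Type u) ⥤ (A ⥤ Type u)ᵒᵖ) (β : ysharp A ⟶ yoneda ⋙ G)
    (P : Aᵒᵖ ⥤ Type u) (a : A) (ζ : (G.obj P).unop.obj a) : P ⟶ yoneda.obj a where
  app b := ↾fun x => (β.app b.unop).unop.app a ((G.map (yonedaEquiv.symm x)).unop.app a ζ)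
  naturality := by
    intro b b' g
    ext x
    have h2 : (yonedaEquiv.symm (P.map g x)) = yoneda.map g.unop ≫ yonedaEquiv.symm x :=
      yonedaEquiv_symm_map g x
    have h1 := ConcreteCategory.congr_hom (NatTrans.congr_app (congr_arg Quiver.Hom.unop
      (β.naturality g.unop)) a) ((G.map (yonedaEquiv.symm x)).unop.app a ζ)
    have h3 : (G.map (yonedaEquiv.symm (P.map g x))).unop.app a ζ
        = (G.map (yoneda.map g.unop)).unop.app a ((G.map (yonedaEquiv.symm x)).unop.app a ζ) := by
      rw [h2, G.map_comp]; rfl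
    exact (congrArg (fun z => (β.app b'.unop).unop.app a z) h3).trans h1.symm

def oLiftL (G : (Aᵒᵖ ⥤ Type u) ⥤ (A ⥤ Type u)ᵒᵖ) (β : ysharp A ⟶ yoneda ⋙ G) :
    OF A ⟶ G where
  app P := (Quiver.Hom.op
    ({ app := fun a => ↾fun ζ => oLiftLaux2 G β P a ζ
       naturality := by
         intro a a' f
         ext ζ
         apply NatTrans.ext
         funext b; ext x
         have h1 := ConcreteCategory.congr_hom (((β.app b.unop).unop).naturality f)
           ((G.map (yonedaEquiv.symm x)).unop.app a ζ)
         have h0 := ConcreteCategory.congr_hom ((G.map (yonedaEquiv.symm x)).unop.naturality f) ζ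
         exact (congrArg (fun z => (β.app b.unop).unop.app a' z) h0).trans h1 } : (G.obj P).unop ⟶ (yoneda ⋙ coyoneda.obj (op P))))
  naturality := by
    intro P Q h
    apply Quiver.Hom.unop_inj
    ext a ζ
    apply NatTrans.ext
    funext b; ext x
    have h2 : (yonedaEquiv.symm (h.app b x) : yoneda.obj b.unop ⟶ Q)
        = yonedaEquiv.symm x ≫ h := by
      apply yonedaEquiv.injective
      rw [Equiv.apply_symm_apply, yonedaEquiv_comp, Equiv.apply_symm_apply]
    dsimp [OF, oLiftLaux2, ysharp]
    rw [h2, G.map_comp]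
    dsimp

end IsbellAux

namespace IsbellAux
variable {A : Type u} [SmallCategory A]

lemma oLiftL_fac (G : (Aᵒᵖ ⥤ Type u) ⥤ (A ⥤ Type u)ᵒᵖ) (β : ysharp A ⟶ yoneda ⋙ G) :
    ounit A ≫ whiskerLeft yoneda (oLiftL G β) = β := by
  ext a
  apply Quiver.Hom.unop_inj
  ext c ζ
  have h1 : (yonedaEquiv.symm (𝟙 a)) = 𝟙 (yoneda.obj a) := by
    apply yonedaEquiv.injective
    rw [Equiv.apply_symm_apply, yonedaEquiv_apply]
    rfl
  exact congrArg (fun (F : G.obj (yoneda.obj a) ⟶ G.obj (yoneda.obj a)) =>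
    (β.app a).unop.app c (F.unop.app c ζ)) ((congrArg G.map h1).trans (G.map_id _))

lemma oLiftL_uniq (G : (Aᵒᵖ ⥤ Type u) ⥤ (A ⥤ Type u)ᵒᵖ) (β : ysharp A ⟶ yoneda ⋙ G)
    (γ : OF A ⟶ G) (hγ : ounit A ≫ whiskerLeft yoneda γ = β) : γ = oLiftL G β := by
  ext P
  apply Quiver.Hom.unop_inj
  ext a ζ
  apply NatTrans.ext
  funext b; ext x
  have hn := ConcreteCategory.congr_hom (NatTrans.congr_app (congr_arg Quiver.Hom.unop
    (γ.naturality (yonedaEquiv.symm x : yoneda.obj b.unop ⟶ P))) a) ζ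
  have hw := ConcreteCategory.congr_hom (NatTrans.congr_app (congr_arg Quiver.Hom.unop
    (NatTrans.congr_app hγ b.unop)) a) ((G.map (yonedaEquiv.symm x)).unop.app a ζ)
  have e : ((γ.app P).unop.app a ζ).app b x
      = yonedaEquiv (yonedaEquiv.symm x ≫ ((γ.app P).unop.app a ζ : P ⟶ yoneda.obj a)) :=
    (congrArg (fun t => ((γ.app P).unop.app a ζ : P ⟶ yoneda.obj a).app b t)
      (yonedaEquiv.apply_symm_apply x)).symm
  exact e.trans ((congrArg yonedaEquiv hn).trans hw)

instance oIsLKE : (OF A).IsLeftKanExtension (ounit A) where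
  nonempty_isUniversal := ⟨IsInitial.ofUniqueHom
    (fun G' => StructuredArrow.homMk (oLiftL G'.right G'.hom) (oLiftL_fac _ _))
    (fun G' m => by
      ext : 1
      exact oLiftL_uniq _ _ m.right (StructuredArrow.w m))⟩

end IsbellAux


theorem isbell_duality_coincidence_and_adjunction (A : Type u) [SmallCategory A] :
    Nonempty (yoneda.leftKanExtension (ysharp A) ≅ yoneda.rightKanExtension (ysharp A)) ∧
    Nonempty ((ysharp A).rightKanExtension yoneda ≅ (ysharp A).leftKanExtension yoneda) ∧
    Nonempty (yoneda.leftKanExtension (ysharp A) ⊣ (ysharp A).rightKanExtension yoneda) := by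
  refine ⟨⟨?_⟩, ⟨?_⟩, ⟨?_⟩⟩
  · exact (Functor.leftKanExtensionUnique _ (yoneda.leftKanExtensionUnit (ysharp A))
      _ (IsbellAux.ounit A)) ≪≫
      (Functor.rightKanExtensionUnique _ (IsbellAux.ocounit A)
        _ (yoneda.rightKanExtensionCounit (ysharp A)))
  · exact (Functor.rightKanExtensionUnique _ ((ysharp A).rightKanExtensionCounit yoneda)
      _ (IsbellAux.specCounit A)) ≪≫
      (Functor.leftKanExtensionUnique _ (IsbellAux.specUnit A)
        _ ((ysharp A).leftKanExtensionUnit yoneda))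
  · let e : uliftYoneda.{u} ⋙ 𝟭 (Aᵒᵖ ⥤ Type u) ≅ yoneda :=
      Functor.rightUnitor _ ≪≫ uliftYonedaIsoYoneda
    haveI : (𝟭 (Aᵒᵖ ⥤ Type u) ⋙ yoneda.leftKanExtension (ysharp A)).IsLeftKanExtension
        (yoneda.leftKanExtensionUnit (ysharp A) ≫ whiskerRight e.inv _ ≫
          (Functor.associator _ _ _).hom) :=
      (Functor.isLeftKanExtension_iff_postcomp₁ (𝟭 _) e
        (yoneda.leftKanExtensionUnit (ysharp A))).1 inferInstance
    let eS : Presheaf.restrictedULiftYoneda.{u} (ysharp A) ≅ IsbellAux.SpecF A :=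
      NatIso.ofComponents (fun X => NatIso.ofComponents (fun b => Equiv.ulift.toIso)
        (by intros; rfl)) (by intros; rfl)
    exact ((Presheaf.uliftYonedaAdjunction.{u}
        (𝟭 (Aᵒᵖ ⥤ Type u) ⋙ yoneda.leftKanExtension (ysharp A))
        (yoneda.leftKanExtensionUnit (ysharp A) ≫ whiskerRight e.inv _ ≫
          (Functor.associator _ _ _).hom)).ofNatIsoLeft
        (Functor.leftUnitor _)).ofNatIsoRight
        (eS ≪≫ (Functor.rightKanExtensionUnique _ (IsbellAux.specCounit A)
          _ ((ysharp A).rightKanExtensionCounit yoneda)))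
end
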